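/- Let (Δ, ℓ) be a labeled simplicial complex over S = k[x₁,…,xₙ], with associated free complex F_Δ (with F_{Δ,i} the free module on (i−1)-dimensional faces with degree shifts by the labels, and differential given by signed quotients of labels). Then for every i ≥ 0 and every monomial m = x^α, the degree-α component H_i(F_Δ)_α is isomorphic as a k-vector space to the reduced simplicial homology H̃_{i−1}(Δ_m; k). -/

import Mathlib

/-- A (combinatorial) simplicial complex: a downward-closed family of finite
subsets of the vertex type `V`. -/
def IsComplex {V : Type} (Δ : Finset V → Prop) : Prop :=
  ∀ σ τ : Finset V, τ ⊆ σ → Δ σ → Δ τ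

/-- The simplicial boundary operator on formal `k`-linear combinations of finite
subsets of `V`, with signs determined by the linear order on `V`. -/
noncomputable def bdry (V : Type) [DecidableEq V] [LinearOrder V]
    (k : Type) [Field k] : (Finset V →₀ k) →ₗ[k] (Finset V →₀ k) :=
  Finsupp.lsum k fun σ => LinearMap.toSpanSingleton k _
    (∑ v ∈ σ, ((-1 : k) ^ ((σ.filter (fun u => u < v)).card)) • Finsupp.single (σ.erase v) (1 : k))

/-- Vanishing of the reduced simplicial homology `H̃_{n-1}(Δ; k)`: chains in
chain degree `n` are supported on faces of cardinality `n` (so chain degree `n`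
corresponds to homological degree `n - 1`, and the empty face sits in chain
degree `0`).  The homology vanishes iff every cycle is a boundary. -/
def HredVanish {V : Type} [DecidableEq V] [LinearOrder V]
    (Δ : Finset V → Prop) (k : Type) [Field k] (n : ℕ) : Prop :=
  ∀ x ∈ Finsupp.supported k k {σ : Finset V | Δ σ ∧ σ.card = n},
    bdry V k x = 0 →
      ∃ y ∈ Finsupp.supported k k {σ : Finset V | Δ σ ∧ σ.card = n + 1},
        bdry V k y = x

namespace Stmt9

/-- The free complex `F_Δ` associated to a labeled simplicial complex `(Δ, ℓ)`
over `S = k[x₁,…,xₙ]`, modeled on the free `S`-module with basis all finite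
subsets of `V` (the term `F_{Δ,i}` being spanned by faces of cardinality `i`,
i.e. dimension `i - 1`).  The differential is
`∂[σ] = Σ_{v ∈ σ} ± (ℓ(σ)/ℓ(σ∖v)) [σ∖v]`, with signs from the linear order on
`V`; labels are monomials encoded by exponent vectors in `Fin n →₀ ℕ`. -/
noncomputable def FDiff (k : Type) [Field k] (n : ℕ) (V : Type) [DecidableEq V] [LinearOrder V]
    (ℓ : Finset V → (Fin n →₀ ℕ)) :
    (Finset V →₀ MvPolynomial (Fin n) k) →ₗ[MvPolynomial (Fin n) k]
      (Finset V →₀ MvPolynomial (Fin n) k) :=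
  Finsupp.lsum (MvPolynomial (Fin n) k) fun σ => LinearMap.toSpanSingleton _ _
    (∑ v ∈ σ, ((-1 : MvPolynomial (Fin n) k) ^ ((σ.filter (fun u => u < v)).card)) •
      Finsupp.single (σ.erase v) (MvPolynomial.monomial (ℓ σ - ℓ (σ.erase v)) (1 : k)))

/-- The degree-`α` strand of the term `F_{Δ,i}`: the `k`-span of the elements
`x^(α - ℓ(σ)) · [σ]` for faces `σ ∈ Δ` of cardinality `i` whose label divides
`x^α`. -/
noncomputable def strand (k : Type) [Field k] (n : ℕ) (V : Type) [DecidableEq V] [LinearOrder V]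
    (Δ : Finset V → Prop) (ℓ : Finset V → (Fin n →₀ ℕ)) (α : Fin n →₀ ℕ) (i : ℕ) :
    Submodule k (Finset V →₀ MvPolynomial (Fin n) k) :=
  Submodule.span k {z | ∃ σ : Finset V, Δ σ ∧ σ.card = i ∧ ℓ σ ≤ α ∧
    z = Finsupp.single σ (MvPolynomial.monomial (α - ℓ σ) (1 : k))}

/-- Degree-`α` cycles of `F_Δ` in homological degree `i`. -/
noncomputable def cyclesF (k : Type) [Field k] (n : ℕ) (V : Type) [DecidableEq V] [LinearOrder V]
    (Δ : Finset V → Prop) (ℓ : Finset V → (Fin n →₀ ℕ)) (α : Fin n →₀ ℕ) (i : ℕ) :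
    Submodule k (Finset V →₀ MvPolynomial (Fin n) k) :=
  strand k n V Δ ℓ α i ⊓ LinearMap.ker (LinearMap.restrictScalars k (FDiff k n V ℓ))

/-- Degree-`α` boundaries of `F_Δ` in homological degree `i`. -/
noncomputable def boundariesF (k : Type) [Field k] (n : ℕ) (V : Type) [DecidableEq V]
    [LinearOrder V] (Δ : Finset V → Prop) (ℓ : Finset V → (Fin n →₀ ℕ)) (α : Fin n →₀ ℕ)
    (i : ℕ) : Submodule k (Finset V →₀ MvPolynomial (Fin n) k) :=
  Submodule.map (LinearMap.restrictScalars k (FDiff k n V ℓ)) (strand k n V Δ ℓ α (i + 1))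

/-- Cycles of the reduced simplicial chain complex of a complex `Γ` in chain
degree `i` (faces of cardinality `i`). -/
noncomputable def cyclesC (k : Type) [Field k] (V : Type) [DecidableEq V] [LinearOrder V]
    (Γ : Finset V → Prop) (i : ℕ) : Submodule k (Finset V →₀ k) :=
  Finsupp.supported k k {σ : Finset V | Γ σ ∧ σ.card = i} ⊓ LinearMap.ker (bdry V k)

/-- Boundaries of the reduced simplicial chain complex of `Γ` in chain degree `i`. -/
noncomputable def boundariesC (k : Type) [Field k] (V : Type) [DecidableEq V] [LinearOrder V]
    (Γ : Finset V → Prop) (i : ℕ) : Submodule k (Finset V →₀ k) :=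
  Submodule.map (bdry V k) (Finsupp.supported k k {σ : Finset V | Γ σ ∧ σ.card = i + 1})

open Submodule in
theorem quotIso {R M N : Type*} [CommRing R] [AddCommGroup M] [Module R M]
    [AddCommGroup N] [Module R N]
    (f : M →ₗ[R] N) (B₁ C₁ : Submodule R M) (B₂ C₂ : Submodule R N)
    (hB : B₁.map f = B₂) (hC : C₁.map f = C₂)
    (hinj : ∀ x ∈ C₁ ⊔ B₁, f x = 0 → x = 0) :
    Nonempty ((C₁.map B₁.mkQ) ≃ₗ[R] (C₂.map B₂.mkQ)) := by
  have hle : B₁ ≤ B₂.comap f := by rw [← hB]; exact le_comap_map f B₁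
  set ψ : (M ⧸ B₁) →ₗ[R] (N ⧸ B₂) := Submodule.mapQ B₁ B₂ f hle with hψ
  have hψmk : ∀ x : M, ψ (B₁.mkQ x) = B₂.mkQ (f x) := fun x => by
    simp [hψ, Submodule.mapQ_apply, Submodule.mkQ_apply]
  have hmaps : ∀ x ∈ C₁.map B₁.mkQ, ψ x ∈ C₂.map B₂.mkQ := by
    rintro _ ⟨c, hc, rfl⟩
    exact ⟨f c, hC ▸ ⟨c, hc, rfl⟩, (hψmk c).symm⟩
  refine ⟨LinearEquiv.ofBijective (ψ.restrict hmaps) ⟨?_, ?_⟩⟩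
  · rw [← LinearMap.ker_eq_bot, LinearMap.ker_eq_bot']
    rintro ⟨x, hx⟩ hx0
    obtain ⟨c, hc, rfl⟩ := hx
    have h0 : ψ (B₁.mkQ c) = 0 := congrArg Subtype.val hx0
    rw [hψmk] at h0
    have hfc : f c ∈ B₂ := by
      rwa [Submodule.mkQ_apply, Submodule.Quotient.mk_eq_zero] at h0
    rw [← hB] at hfc
    obtain ⟨b, hb, hfb⟩ := hfc
    have : c - b = 0 := hinj _ (sub_mem (le_sup_left (a := C₁) hc)
      (le_sup_right (b := B₁) hb)) (by rw [map_sub, hfb, sub_self])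
    ext
    simp only [Submodule.mkQ_apply]
    rw [sub_eq_zero] at this
    rw [this]
    exact (Submodule.Quotient.mk_eq_zero B₁).mpr hb
  · rintro ⟨_, c, hc, rfl⟩
    rw [← hC] at hc
    obtain ⟨x, hx, rfl⟩ := hc
    exact ⟨⟨B₁.mkQ x, ⟨x, hx, rfl⟩⟩, Subtype.ext (hψmk x)⟩

variable (k : Type) [Field k] (n : ℕ) (V : Type) [DecidableEq V] [LinearOrder V]
  (Δ : Finset V → Prop) (ℓ : Finset V → (Fin n →₀ ℕ)) (α : Fin n →₀ ℕ)

noncomputable def Phi : (Finset V →₀ MvPolynomial (Fin n) k) →ₗ[k] (Finset V →₀ k) :=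
  Finsupp.lsum k fun σ => (Finsupp.lsingle σ).comp (MvPolynomial.lcoeff k (α - ℓ σ))

noncomputable def Psi : (Finset V →₀ k) →ₗ[k] (Finset V →₀ MvPolynomial (Fin n) k) :=
  Finsupp.lsum k fun σ => LinearMap.toSpanSingleton k _
    (Finsupp.single σ (MvPolynomial.monomial (α - ℓ σ) (1 : k)))

noncomputable def genF (σ : Finset V) : Finset V →₀ MvPolynomial (Fin n) k :=
  Finsupp.single σ (MvPolynomial.monomial (α - ℓ σ) (1 : k))

def Sset (i : ℕ) : Set (Finset V) := {σ : Finset V | (Δ σ ∧ ℓ σ ≤ α) ∧ σ.card = i}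

lemma Phi_single (σ : Finset V) (p : MvPolynomial (Fin n) k) :
    Phi k n V ℓ α (Finsupp.single σ p) = Finsupp.single σ (MvPolynomial.coeff (α - ℓ σ) p) := by
  simp [Phi]

lemma Psi_single (σ : Finset V) (c : k) :
    Psi k n V ℓ α (Finsupp.single σ c) = Finsupp.single σ (MvPolynomial.monomial (α - ℓ σ) c) := by
  simp [Psi, Finsupp.smul_single, MvPolynomial.smul_monomial]

lemma Phi_gen (σ : Finset V) : Phi k n V ℓ α (genF k n V ℓ α σ) = Finsupp.single σ 1 := by
  simp [genF, Phi_single, MvPolynomial.coeff_monomial]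

lemma Psi_single_one (σ : Finset V) : Psi k n V ℓ α (Finsupp.single σ 1) = genF k n V ℓ α σ := by
  simp [genF, Psi_single]

lemma Phi_Psi (x : Finset V →₀ k) : Phi k n V ℓ α (Psi k n V ℓ α x) = x := by
  induction x using Finsupp.induction_linear with
  | zero => simp
  | add f g hf hg => simp [map_add, hf, hg]
  | single σ c => simp [Psi_single, Phi_single, MvPolynomial.coeff_monomial]

lemma strand_eq (i : ℕ) : strand k n V Δ ℓ α i =
    Submodule.span k ((genF k n V ℓ α) '' (Sset n V Δ ℓ α i)) := by
  unfold strand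
  congr 1
  ext z
  constructor
  · rintro ⟨σ, h1, h2, h3, rfl⟩; exact ⟨σ, ⟨⟨h1, h3⟩, h2⟩, rfl⟩
  · rintro ⟨σ, ⟨⟨h1, h3⟩, h2⟩, rfl⟩; exact ⟨σ, h1, h2, h3, rfl⟩

lemma map_Phi_strand (i : ℕ) : (strand k n V Δ ℓ α i).map (Phi k n V ℓ α) =
    Finsupp.supported k k (Sset n V Δ ℓ α i) := by
  rw [strand_eq, Finsupp.supported_eq_span_single, Submodule.map_span, ← Set.image_comp]
  congr 1
  exact Set.image_congr fun σ _ => Phi_gen k n V ℓ α σ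

lemma map_Psi_supported (i : ℕ) :
    (Finsupp.supported k k (Sset n V Δ ℓ α i)).map (Psi k n V ℓ α) = strand k n V Δ ℓ α i := by
  rw [strand_eq, Finsupp.supported_eq_span_single, Submodule.map_span, ← Set.image_comp]
  congr 1
  exact Set.image_congr fun σ _ => Psi_single_one k n V ℓ α σ

lemma Psi_Phi_strand (i : ℕ) (x : Finset V →₀ MvPolynomial (Fin n) k)
    (hx : x ∈ strand k n V Δ ℓ α i) : Psi k n V ℓ α (Phi k n V ℓ α x) = x := by
  rw [strand_eq] at hx
  induction hx using Submodule.span_induction with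
  | mem z hz =>
    obtain ⟨σ, _, rfl⟩ := hz
    rw [Phi_gen, Psi_single_one]
  | zero => simp
  | add y z _ _ hy hz => simp [map_add, hy, hz]
  | smul c y _ hy => simp [map_smul, hy]

lemma bdry_single (σ : Finset V) : bdry V k (Finsupp.single σ (1 : k)) =
    ∑ v ∈ σ, ((-1 : k) ^ ((σ.filter (fun u => u < v)).card)) •
      Finsupp.single (σ.erase v) (1 : k) := by
  simp [bdry]

variable {k n V Δ ℓ α}

lemma exp_arith {a b c : Fin n →₀ ℕ} (h1 : c ≤ b) (h2 : b ≤ a) :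
    (a - b) + (b - c) = a - c := by
  ext x
  simp only [Finsupp.add_apply, Finsupp.tsub_apply]
  exact tsub_add_tsub_cancel (Finsupp.le_def.mp h2 x) (Finsupp.le_def.mp h1 x)

lemma FDiff_gen (hmono : ∀ σ τ : Finset V, σ ⊆ τ → Δ τ → ℓ σ ≤ ℓ τ)
    (σ : Finset V) (hσ : Δ σ) (hle : ℓ σ ≤ α) :
    FDiff k n V ℓ (genF k n V ℓ α σ) =
      Psi k n V ℓ α (bdry V k (Finsupp.single σ (1 : k))) := by
  rw [bdry_single, map_sum]
  unfold FDiff genF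
  rw [Finsupp.lsum_single, LinearMap.toSpanSingleton_apply, Finset.smul_sum]
  refine Finset.sum_congr rfl fun v hv => ?_
  have hsub : σ.erase v ⊆ σ := Finset.erase_subset v σ
  have hℓ : ℓ (σ.erase v) ≤ ℓ σ := hmono _ _ hsub hσ
  rw [map_smul, Psi_single_one]
  unfold genF
  rw [smul_comm, Finsupp.smul_single, Finsupp.smul_single, smul_smul, smul_eq_mul,
    mul_assoc, MvPolynomial.monomial_mul, one_mul, exp_arith hℓ hle, Finsupp.smul_single,
    MvPolynomial.smul_eq_C_mul, map_pow, map_neg, MvPolynomial.C_1]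

lemma FDiff_strand (hmono : ∀ σ τ : Finset V, σ ⊆ τ → Δ τ → ℓ σ ≤ ℓ τ)
    {i : ℕ} {x : Finset V →₀ MvPolynomial (Fin n) k} (hx : x ∈ strand k n V Δ ℓ α i) :
    FDiff k n V ℓ x = Psi k n V ℓ α (bdry V k (Phi k n V ℓ α x)) := by
  rw [strand_eq] at hx
  induction hx using Submodule.span_induction with
  | mem z hz =>
    obtain ⟨σ, ⟨⟨h1, h3⟩, _⟩, rfl⟩ := hz
    rw [FDiff_gen hmono σ h1 h3, Phi_gen]
  | zero => simp
  | add y z _ _ hy hz => simp only [map_add, hy, hz]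
  | smul c y _ hy => simp only [LinearMap.map_smul_of_tower, map_smul, hy]

lemma bdry_supported (hΔ : ∀ σ τ : Finset V, τ ⊆ σ → Δ σ → Δ τ)
    (hmono : ∀ σ τ : Finset V, σ ⊆ τ → Δ τ → ℓ σ ≤ ℓ τ)
    {i : ℕ} {x : Finset V →₀ k} (hx : x ∈ Finsupp.supported k k (Sset n V Δ ℓ α (i+1))) :
    bdry V k x ∈ Finsupp.supported k k (Sset n V Δ ℓ α i) := by
  rw [Finsupp.supported_eq_span_single] at hx
  induction hx using Submodule.span_induction with
  | mem z hz =>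
    obtain ⟨σ, hσ, rfl⟩ := hz
    rw [bdry_single]
    refine Submodule.sum_mem _ fun v hv => Submodule.smul_mem _ _ ?_
    refine Finsupp.single_mem_supported k 1 ?_
    refine ⟨⟨hΔ σ _ (Finset.erase_subset v σ) hσ.1.1,
      (hmono _ _ (Finset.erase_subset v σ) hσ.1.1).trans hσ.1.2⟩, ?_⟩
    simp [Finset.card_erase_of_mem hv, hσ.2]
  | zero => simp
  | add y z _ _ hy hz => rw [map_add]; exact Submodule.add_mem _ hy hz
  | smul c y _ hy => rw [map_smul]; exact Submodule.smul_mem _ _ hy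


/-- **Bayer–Peeva–Sturmfels.**  For a labeled simplicial complex `(Δ, ℓ)` over
`S = k[x₁,…,xₙ]` with associated free complex `F_Δ`, for every `i ≥ 0` and
every monomial `m = x^α`, the degree-`α` component `H_i(F_Δ)_α` is isomorphic
as a `k`-vector space to the reduced simplicial homology `H̃_{i-1}(Δ_m; k)`,
where `Δ_m = {σ ∈ Δ : ℓ(σ) ∣ m}` (faces of cardinality `i` have dimension
`i - 1`, so both sides are computed from faces of cardinality `i`). -/

theorem homology_strand_iso (k : Type) [Field k] (n : ℕ) (V : Type) [DecidableEq V]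
    [LinearOrder V] [Fintype V]
    (Δ : Finset V → Prop) (hΔ : IsComplex Δ) (hempty : Δ ∅)
    (ℓ : Finset V → (Fin n →₀ ℕ)) (h0 : ℓ ∅ = 0)
    (hmono : ∀ σ τ : Finset V, σ ⊆ τ → Δ τ → ℓ σ ≤ ℓ τ)
    (i : ℕ) (α : Fin n →₀ ℕ) :
    Nonempty (
      (Submodule.map (boundariesF k n V Δ ℓ α i).mkQ (cyclesF k n V Δ ℓ α i))
      ≃ₗ[k]
      (Submodule.map (boundariesC k V (fun σ => Δ σ ∧ ℓ σ ≤ α) i).mkQ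
        (cyclesC k V (fun σ => Δ σ ∧ ℓ σ ≤ α) i))) := by
  set D := LinearMap.restrictScalars k (FDiff k n V ℓ) with hD
  have hDapp : ∀ x, D x = FDiff k n V ℓ x := fun _ => rfl
  have hcycC : cyclesC k V (fun σ => Δ σ ∧ ℓ σ ≤ α) i =
      Finsupp.supported k k (Sset n V Δ ℓ α i) ⊓ LinearMap.ker (bdry V k) := rfl
  have hbdC : boundariesC k V (fun σ => Δ σ ∧ ℓ σ ≤ α) i =
      Submodule.map (bdry V k) (Finsupp.supported k k (Sset n V Δ ℓ α (i+1))) := rfl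
  -- image of boundaries
  have hB : (boundariesF k n V Δ ℓ α i).map (Phi k n V ℓ α) =
      boundariesC k V (fun σ => Δ σ ∧ ℓ σ ≤ α) i := by
    rw [hbdC]
    apply le_antisymm
    · rintro _ ⟨_, ⟨x, hx, rfl⟩, rfl⟩
      refine ⟨Phi k n V ℓ α x, map_Phi_strand k n V Δ ℓ α (i+1) ▸
        Submodule.mem_map_of_mem hx, ?_⟩
      rw [hDapp, FDiff_strand hmono hx, Phi_Psi]
    · rintro _ ⟨c, hc, rfl⟩
      have hx : Psi k n V ℓ α c ∈ strand k n V Δ ℓ α (i+1) :=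
        map_Psi_supported k n V Δ ℓ α (i+1) ▸ Submodule.mem_map_of_mem hc
      refine ⟨D (Psi k n V ℓ α c), Submodule.mem_map_of_mem hx, ?_⟩
      rw [hDapp, FDiff_strand hmono hx, Phi_Psi, Phi_Psi]
  -- image of cycles
  have hC : (cyclesF k n V Δ ℓ α i).map (Phi k n V ℓ α) =
      cyclesC k V (fun σ => Δ σ ∧ ℓ σ ≤ α) i := by
    rw [hcycC]
    apply le_antisymm
    · rintro _ ⟨x, ⟨hx1, hx2⟩, rfl⟩
      refine ⟨map_Phi_strand k n V Δ ℓ α i ▸ Submodule.mem_map_of_mem hx1, ?_⟩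
      simp only [SetLike.mem_coe, LinearMap.mem_ker] at hx2 ⊢
      have h1 : FDiff k n V ℓ x = Psi k n V ℓ α (bdry V k (Phi k n V ℓ α x)) :=
        FDiff_strand hmono hx1
      rw [hDapp] at hx2
      rw [hx2] at h1
      have := congrArg (Phi k n V ℓ α) h1.symm
      rwa [Phi_Psi, map_zero] at this
    · rintro c ⟨hc1, hc2⟩
      have hx : Psi k n V ℓ α c ∈ strand k n V Δ ℓ α i :=
        map_Psi_supported k n V Δ ℓ α i ▸ Submodule.mem_map_of_mem hc1
      refine ⟨Psi k n V ℓ α c, ⟨hx, ?_⟩, Phi_Psi k n V ℓ α c⟩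
      simp only [SetLike.mem_coe, LinearMap.mem_ker] at hc2 ⊢
      rw [hDapp, FDiff_strand hmono hx, Phi_Psi, hc2, map_zero]
  -- injectivity on cycles ⊔ boundaries
  have hstr : cyclesF k n V Δ ℓ α i ⊔ boundariesF k n V Δ ℓ α i ≤ strand k n V Δ ℓ α i := by
    refine sup_le inf_le_left ?_
    rintro _ ⟨x, hx, rfl⟩
    rw [hDapp, FDiff_strand hmono hx]
    have h1 : Phi k n V ℓ α x ∈ Finsupp.supported k k (Sset n V Δ ℓ α (i+1)) :=
      map_Phi_strand k n V Δ ℓ α (i+1) ▸ Submodule.mem_map_of_mem hx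
    have h2 := bdry_supported hΔ hmono h1
    exact map_Psi_supported k n V Δ ℓ α i ▸ Submodule.mem_map_of_mem h2
  have hinj : ∀ x ∈ cyclesF k n V Δ ℓ α i ⊔ boundariesF k n V Δ ℓ α i,
      Phi k n V ℓ α x = 0 → x = 0 := by
    intro x hx h0'
    have := Psi_Phi_strand k n V Δ ℓ α i x (hstr hx)
    rw [h0', map_zero] at this
    exact this.symm
  exact quotIso (Phi k n V ℓ α) _ _ _ _ hB hC hinj

end Stmt9
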